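/- Let (X,σ) be a subshift and L ∈ ℕ. Suppose X = X₀ ⊃ X₁ ⊃ ⋯ ⊃ X_k is a descending chain of nonempty subshifts where for each 0 ≤ i < k there is a word w_i ∈ L(X_i) with |w_i| ≤ L such that X_{i+1} = X_i(w_i), and suppose that for each i the cylinder set [w_i]₀⁺ ∩ X_i contains at least one aperiodic point. Then k < P_X(2L−1)/L. -/

import Mathlib

open Filter Topology Pointwise

section Defs

variable {A : Type*}

/-- The left shift on bi-infinite sequences over `A`. -/
def shift (x : ℤ → A) : ℤ → A := fun i => x (i + 1)

/-- The word `w` occurs in `x` at position `j`. -/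
def OccursAt {n : ℕ} (x : ℤ → A) (w : Fin n → A) (j : ℤ) : Prop :=
  ∀ i : Fin n, x (j + (i : ℤ)) = w i

/-- The word `w` belongs to the language of `X`. -/
def InLanguage (X : Set (ℤ → A)) {n : ℕ} (w : Fin n → A) : Prop :=
  ∃ x ∈ X, OccursAt x w 0

/-- The complexity function of `X`: the number of words of length `n` in the language. -/
noncomputable def complexity (X : Set (ℤ → A)) (n : ℕ) : ℕ :=
  {w : Fin n → A | InLanguage X w}.ncard

/-- `x` is aperiodic: no positive shift fixes it. -/
def IsAperiodic (x : ℤ → A) : Prop := ∀ p : ℤ, 0 < p → (fun i => x (i + p)) ≠ x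

/-- The subshift obtained from `X` by forbidding the word `w`. -/
def Forbid (X : Set (ℤ → A)) {n : ℕ} (w : Fin n → A) : Set (ℤ → A) :=
  {x ∈ X | ∀ j : ℤ, ¬ OccursAt x w j}

/-- `w` extends uniquely `L` times to the right and left in the language of `X`. -/
def ExtendsUniquely (X : Set (ℤ → A)) {n : ℕ} (w : Fin n → A) (L : ℕ) : Prop :=
  ∃! u : Fin (n + 2 * L) → A,
    InLanguage X u ∧ ∀ i : Fin n, u ⟨L + (i : ℕ), by have := i.isLt; omega⟩ = w i

variable [TopologicalSpace A]

/-- The automorphism group of a subshift `X`: permutations of `X` which are homeomorphisms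
and commute with the shift. -/
def Aut (X : Set (ℤ → A)) : Subgroup (Equiv.Perm ↥X) where
  carrier := {φ | Continuous ⇑φ ∧ Continuous ⇑φ.symm ∧
    (∀ x y : ↥X, shift (x : ℤ → A) = (y : ℤ → A) →
      shift ((φ x : ℤ → A)) = ((φ y : ℤ → A))) ∧
    (∀ x y : ↥X, shift (x : ℤ → A) = (y : ℤ → A) →
      shift ((φ.symm x : ℤ → A)) = ((φ.symm y : ℤ → A)))}
  one_mem' := ⟨continuous_id, continuous_id, fun _ _ h => h, fun _ _ h => h⟩
  mul_mem' := by
    rintro a b ⟨hac, hac', haσ, haσ'⟩ ⟨hbc, hbc', hbσ, hbσ'⟩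
    refine ⟨?_, ?_, ?_, ?_⟩
    · simpa using hac.comp hbc
    · simpa [Equiv.Perm.mul_def] using hbc'.comp hac'
    · intro x y h
      simpa using haσ _ _ (hbσ x y h)
    · intro x y h
      simpa [Equiv.Perm.mul_def] using hbσ' _ _ (haσ' x y h)
  inv_mem' := by
    rintro a ⟨hac, hac', haσ, haσ'⟩
    exact ⟨hac', by first | exact hac | simpa [Equiv.Perm.inv_def] using hac, fun x y h => haσ' x y h,
      fun x y h => by first | exact haσ x y h | simpa [Equiv.Perm.inv_def] using haσ x y h⟩

/-- `f` is a block code of range `R` representing `φ`. -/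
def IsBlockCode (X : Set (ℤ → A)) (R : ℕ) (φ : Equiv.Perm ↥X)
    (f : (Fin (2 * R + 1) → A) → A) : Prop :=
  ∀ (x : ↥X) (i : ℤ), (φ x : ℤ → A) i = f (fun j => (x : ℤ → A) (i + (j : ℤ) - R))

/-- `Aut_R(X)`: automorphisms such that both they and their inverses are given by
sliding block codes of range `R`. -/
def AutR (X : Set (ℤ → A)) (R : ℕ) : Set (Equiv.Perm ↥X) :=
  {φ | φ ∈ Aut X ∧ (∃ f, IsBlockCode X R φ f) ∧ (∃ g, IsBlockCode X R φ⁻¹ g)}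

end Defs

/-- Apply a block code of range `R` to a word, shortening it by `2R`. -/
def applyCode {A : Type*} {R n : ℕ} (f : (Fin (2 * R + 1) → A) → A) (w : Fin n → A) :
    Fin (n - 2 * R) → A :=
  fun i => f (fun j => w ⟨(i : ℕ) + (j : ℕ), by have := i.isLt; have := j.isLt; omega⟩)

section Defs2

variable {A : Type*} [TopologicalSpace A]

/-- `φ` preserves occurrences of `v`. -/
def PreservesOcc (X : Set (ℤ → A)) (φ : Equiv.Perm ↥X) {n : ℕ} (v : Fin n → A) : Prop :=
  ∀ x : ↥X, OccursAt (x : ℤ → A) v 0 → OccursAt ((φ x : ℤ → A)) v 0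

/-- `φ` preserves occurrences of `v` which are at least `D` units away from any occurrence of
the words `u 0, …, u (i-1)`. -/
def PreservesOccAway (X : Set (ℤ → A)) (φ : Equiv.Perm ↥X) {n : ℕ} (v : Fin n → A)
    (D : ℕ) (ml : ℕ → ℕ) (u : ∀ t, Fin (ml t) → A) (i : ℕ) : Prop :=
  ∀ x : ↥X, OccursAt (x : ℤ → A) v 0 →
    (∀ t < i, ∀ p : ℤ, -(D : ℤ) ≤ p → p + ml t ≤ n + D → ¬ OccursAt (x : ℤ → A) (u t) p) →
    OccursAt ((φ x : ℤ → A)) v 0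

end Defs2

/-- A countable discrete group is amenable if it admits a Følner sequence. -/
def FolnerAmenable (G : Type*) [Group G] : Prop :=
  ∃ F : ℕ → Set G, (∀ k, (F k).Finite) ∧
    (∀ g : G, ∀ᶠ k in atTop, g ∈ F k) ∧
    ∀ g : G, Tendsto (fun k => ((symmDiff (g • F k) (F k)).ncard : ℝ) / ((F k).ncard : ℝ))
      atTop (𝓝 0)

namespace ChainAux

variable {A : Type*}

/-- window of length `n` at position `j` -/
def win (x : ℤ → A) (n : ℕ) (j : ℤ) : Fin n → A := fun i => x (j + (i : ℤ))

lemma win_prefix (x : ℤ → A) (ℓ : ℕ) (j : ℤ) :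
    (fun i : Fin ℓ => win x (ℓ + 1) j i.castSucc) = win x ℓ j := by
  funext i
  simp [win]

lemma win_suffix (x : ℤ → A) (ℓ : ℕ) (j : ℤ) :
    (fun i : Fin ℓ => win x (ℓ + 1) j i.succ) = win x ℓ (j + 1) := by
  funext i
  show x (j + ((i : ℕ) + 1 : ℕ)) = x (j + 1 + (i : ℤ))
  congr 1
  push_cast
  ring

lemma range_pre (x : ℤ → A) (ℓ : ℕ) :
    (fun (u : Fin (ℓ + 1) → A) => fun i : Fin ℓ => u i.castSucc) '' Set.range (win x (ℓ + 1))
      = Set.range (win x ℓ) := by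
  ext u
  constructor
  · rintro ⟨v, ⟨j, rfl⟩, rfl⟩
    exact ⟨j, (win_prefix x ℓ j).symm⟩
  · rintro ⟨j, rfl⟩
    exact ⟨win x (ℓ + 1) j, ⟨j, rfl⟩, win_prefix x ℓ j⟩

lemma range_suf (x : ℤ → A) (ℓ : ℕ) :
    (fun (u : Fin (ℓ + 1) → A) => fun i : Fin ℓ => u i.succ) '' Set.range (win x (ℓ + 1))
      = Set.range (win x ℓ) := by
  ext u
  constructor
  · rintro ⟨v, ⟨j, rfl⟩, rfl⟩
    exact ⟨j + 1, (win_suffix x ℓ j).symm⟩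
  · rintro ⟨j, rfl⟩
    refine ⟨win x (ℓ + 1) (j - 1), ⟨j - 1, rfl⟩, ?_⟩
    show (fun i : Fin ℓ => win x (ℓ + 1) (j - 1) i.succ) = win x ℓ j
    rw [win_suffix x ℓ (j - 1), show j - 1 + 1 = j from by ring]

lemma exists_plateau [Finite A] (x : ℤ → A) (n c : ℕ) (hcn : c < n)
    (h : (Set.range (win x n)).ncard ≤ c) :
    ∃ ℓ, 1 ≤ ℓ ∧ ℓ < n ∧ (Set.range (win x ℓ)).ncard = (Set.range (win x (ℓ + 1))).ncard := by
  by_contra hno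
  push_neg at hno
  have mono : ∀ ℓ : ℕ, (Set.range (win x ℓ)).ncard ≤ (Set.range (win x (ℓ + 1))).ncard := by
    intro ℓ
    rw [← range_pre x ℓ]
    exact Set.ncard_image_le (Set.toFinite _)
  have grow : ∀ d : ℕ, d + 1 ≤ n → d + 1 ≤ (Set.range (win x (d + 1))).ncard := by
    intro d
    induction d with
    | zero =>
      intro _
      have hpos : 0 < (Set.range (win x (0 + 1))).ncard :=
        (Set.ncard_pos (Set.toFinite _)).mpr ⟨win x (0 + 1) 0, ⟨0, rfl⟩⟩
      omega
    | succ d ih =>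
      intro hd
      have h1 := ih (by omega)
      have h2 := mono (d + 1)
      have h3 := hno (d + 1) (by omega) (by omega)
      omega
  have hg := grow (n - 1) (by omega)
  have hn : n - 1 + 1 = n := by omega
  rw [hn] at hg
  omega

lemma exists_period [Finite A] (x : ℤ → A) (n c : ℕ) (hcn : c < n)
    (h : (Set.range (win x n)).ncard ≤ c) :
    ∃ p : ℤ, 0 < p ∧ ∀ t : ℤ, x (t + p) = x t := by
  obtain ⟨ℓ, hℓ1, hℓn, heq⟩ := exists_plateau x n c hcn h
  have hπ : Set.InjOn (fun (u : Fin (ℓ + 1) → A) => fun i : Fin ℓ => u i.castSucc)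
      (Set.range (win x (ℓ + 1))) :=
    Set.injOn_of_ncard_image_eq (by rw [range_pre]; exact heq) (Set.toFinite _)
  have hς : Set.InjOn (fun (u : Fin (ℓ + 1) → A) => fun i : Fin ℓ => u i.succ)
      (Set.range (win x (ℓ + 1))) :=
    Set.injOn_of_ncard_image_eq (by rw [range_suf]; exact heq) (Set.toFinite _)
  have stepR : ∀ j1 j2 : ℤ, win x ℓ j1 = win x ℓ j2 → win x ℓ (j1 + 1) = win x ℓ (j2 + 1) := by
    intro j1 j2 hj
    have e : win x (ℓ + 1) j1 = win x (ℓ + 1) j2 := by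
      refine hπ (Set.mem_range_self _) (Set.mem_range_self _) ?_
      show (fun i : Fin ℓ => win x (ℓ + 1) j1 i.castSucc)
        = (fun i : Fin ℓ => win x (ℓ + 1) j2 i.castSucc)
      rw [win_prefix, win_prefix]
      exact hj
    rw [← win_suffix x ℓ j1, ← win_suffix x ℓ j2, e]
  have stepL : ∀ j1 j2 : ℤ, win x ℓ j1 = win x ℓ j2 → win x ℓ (j1 - 1) = win x ℓ (j2 - 1) := by
    intro j1 j2 hj
    have e : win x (ℓ + 1) (j1 - 1) = win x (ℓ + 1) (j2 - 1) := by
      refine hς (Set.mem_range_self _) (Set.mem_range_self _) ?_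
      show (fun i : Fin ℓ => win x (ℓ + 1) (j1 - 1) i.succ)
        = (fun i : Fin ℓ => win x (ℓ + 1) (j2 - 1) i.succ)
      rw [win_suffix, win_suffix, show j1 - 1 + 1 = j1 from by ring,
        show j2 - 1 + 1 = j2 from by ring]
      exact hj
    calc win x ℓ (j1 - 1) = (fun i : Fin ℓ => win x (ℓ + 1) (j1 - 1) i.castSucc) :=
          (win_prefix x ℓ (j1 - 1)).symm
    _ = (fun i : Fin ℓ => win x (ℓ + 1) (j2 - 1) i.castSucc) := by rw [e]
    _ = win x ℓ (j2 - 1) := win_prefix x ℓ (j2 - 1)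
  have hfin : (Set.range (win x ℓ)).Finite := Set.toFinite _
  have hmaps : ∀ a ∈ Finset.range ((Set.range (win x ℓ)).ncard + 1),
      win x ℓ (a : ℤ) ∈ hfin.toFinset := by
    intro a _
    rw [Set.Finite.mem_toFinset]
    exact Set.mem_range_self _
  have hlt : hfin.toFinset.card < (Finset.range ((Set.range (win x ℓ)).ncard + 1)).card := by
    rw [Finset.card_range, ← Set.ncard_eq_toFinset_card _ hfin]
    omega
  obtain ⟨a, ha, b, hb, hab, he⟩ := Finset.exists_ne_map_eq_of_card_lt_of_maps_to hlt hmaps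
  have main : ∀ a b : ℕ, a < b → win x ℓ (a : ℤ) = win x ℓ (b : ℤ) →
      ∃ p : ℤ, 0 < p ∧ ∀ t : ℤ, x (t + p) = x t := by
    intro a b hab' heq'
    have H : ∀ d : ℤ, win x ℓ ((a : ℤ) + d) = win x ℓ ((b : ℤ) + d) := by
      intro d
      induction d using Int.induction_on with
      | zero => simpa using heq'
      | succ i ih =>
        rw [show (a : ℤ) + ((i : ℤ) + 1) = ((a : ℤ) + (i : ℤ)) + 1 from by ring,
          show (b : ℤ) + ((i : ℤ) + 1) = ((b : ℤ) + (i : ℤ)) + 1 from by ring]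
        exact stepR _ _ ih
      | pred i ih =>
        rw [show (a : ℤ) + (-(i : ℤ) - 1) = ((a : ℤ) + (-(i : ℤ))) - 1 from by ring,
          show (b : ℤ) + (-(i : ℤ) - 1) = ((b : ℤ) + (-(i : ℤ))) - 1 from by ring]
        exact stepL _ _ ih
    refine ⟨(b : ℤ) - (a : ℤ), by omega, fun t => ?_⟩
    have h1 := H (t - a)
    rw [show (a : ℤ) + (t - a) = t from by ring,
      show (b : ℤ) + (t - a) = t + ((b : ℤ) - (a : ℤ)) from by ring] at h1
    have h2 : x (t + ((0 : ℕ) : ℤ)) = x (t + ((b : ℤ) - (a : ℤ)) + ((0 : ℕ) : ℤ)) :=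
      congrFun h1 ⟨0, by omega⟩
    simpa using h2.symm
  rcases hab.lt_or_gt with h' | h'
  · exact main a b h' he
  · exact main b a h' he.symm

def Contains {m n : ℕ} (u : Fin n → A) (wd : Fin m → A) : Prop :=
  ∃ r : ℕ, ∃ _h : r + m ≤ n,
    ∀ t : Fin m, u ⟨r + (t : ℕ), by have := t.isLt; omega⟩ = wd t

def goodWords (x : ℤ → A) {m : ℕ} (wd : Fin m → A) (n : ℕ) : Set (Fin n → A) :=
  {u | (∃ j : ℤ, win x n j = u) ∧ Contains u wd}

lemma key [Finite A] {L m : ℕ} (hL : 0 < L) (hm : m ≤ L) (x : ℤ → A)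
    (hap : IsAperiodic x) (w : Fin m → A) (h0 : OccursAt x w 0) :
    L ≤ (goodWords x w (2 * L - 1)).ncard := by
  by_contra hcon
  push_neg at hcon
  have hDfin : (goodWords x w (2 * L - 1)).Finite := Set.toFinite _
  have hwinD : ∀ (o : ℤ) (s : ℕ), s + m ≤ 2 * L - 1 → OccursAt x w o →
      win x (2 * L - 1) (o - s) ∈ goodWords x w (2 * L - 1) := by
    intro o s hs ho
    simp only [goodWords, Contains, Set.mem_setOf_eq]
    refine ⟨⟨o - (s : ℤ), rfl⟩, s, hs, fun t => ?_⟩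
    show x (o - (s : ℤ) + ((s + (t : ℕ) : ℕ) : ℤ)) = w t
    rw [show o - (s : ℤ) + ((s + (t : ℕ) : ℕ) : ℤ) = o + ((t : ℕ) : ℤ) from by push_cast; ring]
    exact ho t
  have hF2 : ∀ o : ℤ, OccursAt x w o → ∃ p : ℕ, 1 ≤ p ∧ p ≤ 2 * L - 1 - m ∧
      OccursAt x w (o + p) ∧ OccursAt x w (o - p) := by
    intro o ho
    have hmaps : ∀ s ∈ Finset.range (2 * L - m),
        win x (2 * L - 1) (o - s) ∈ hDfin.toFinset := by
      intro s hs
      rw [Set.Finite.mem_toFinset]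
      refine hwinD o s ?_ ho
      simp only [Finset.mem_range] at hs
      omega
    have hlt : hDfin.toFinset.card < (Finset.range (2 * L - m)).card := by
      rw [Finset.card_range, ← Set.ncard_eq_toFinset_card _ hDfin]
      omega
    obtain ⟨s1, hs1, s2, hs2, hne, heq⟩ :=
      Finset.exists_ne_map_eq_of_card_lt_of_maps_to hlt hmaps
    simp only [Finset.mem_range] at hs1 hs2
    have main : ∀ a b : ℕ, a < b → b < 2 * L - m →
        win x (2 * L - 1) (o - a) = win x (2 * L - 1) (o - b) →
        OccursAt x w (o + ((b - a : ℕ) : ℤ)) ∧ OccursAt x w (o - ((b - a : ℕ) : ℤ)) := by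
      intro a b hab hb he
      have hfun : ∀ i : Fin (2 * L - 1), x (o - (a : ℤ) + (i : ℤ)) = x (o - (b : ℤ) + (i : ℤ)) :=
        fun i => congrFun he i
      constructor
      · intro t
        have h1 := hfun ⟨b + (t : ℕ), by have := t.isLt; omega⟩
        rw [show o - (a : ℤ) + (((b + (t : ℕ) : ℕ) : ℕ) : ℤ)
              = o + ((b - a : ℕ) : ℤ) + ((t : ℕ) : ℤ) from by omega,
          show o - (b : ℤ) + (((b + (t : ℕ) : ℕ) : ℕ) : ℤ) = o + ((t : ℕ) : ℤ) from by omega] at h1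
        rw [h1]
        exact ho t
      · intro t
        have h1 := hfun ⟨a + (t : ℕ), by have := t.isLt; omega⟩
        rw [show o - (a : ℤ) + (((a + (t : ℕ) : ℕ) : ℕ) : ℤ) = o + ((t : ℕ) : ℤ) from by omega,
          show o - (b : ℤ) + (((a + (t : ℕ) : ℕ) : ℕ) : ℤ)
              = o - ((b - a : ℕ) : ℤ) + ((t : ℕ) : ℤ) from by omega] at h1
        rw [← h1]
        exact ho t
    rcases hne.lt_or_gt with h' | h'
    · obtain ⟨hpos, hneg⟩ := main s1 s2 h' hs2 heq
      exact ⟨s2 - s1, by omega, by omega, hpos, hneg⟩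
    · obtain ⟨hpos, hneg⟩ := main s2 s1 h' hs1 heq.symm
      exact ⟨s1 - s2, by omega, by omega, hpos, hneg⟩
  have hCup : ∀ N : ℕ, ∃ o : ℤ, OccursAt x w o ∧ (N : ℤ) ≤ o ∧
      o ≤ (N : ℤ) + ((2 * L - 1 - m : ℕ) : ℤ) := by
    intro N
    induction N with
    | zero => exact ⟨0, h0, by omega, by omega⟩
    | succ N ih =>
      obtain ⟨o, ho, h1, h2⟩ := ih
      by_cases hc : ((N : ℤ) + 1) ≤ o
      · exact ⟨o, ho, by omega, by omega⟩
      · obtain ⟨p, hp1, hp2, hup, _⟩ := hF2 o ho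
        exact ⟨o + p, hup, by omega, by omega⟩
  have hCdn : ∀ N : ℕ, ∃ o : ℤ, OccursAt x w o ∧ -(N : ℤ) ≤ o ∧
      o ≤ -(N : ℤ) + ((2 * L - 1 - m : ℕ) : ℤ) := by
    intro N
    induction N with
    | zero => exact ⟨0, h0, by omega, by omega⟩
    | succ N ih =>
      obtain ⟨o, ho, h1, h2⟩ := ih
      by_cases hc : o ≤ -((N : ℤ) + 1) + ((2 * L - 1 - m : ℕ) : ℤ)
      · exact ⟨o, ho, by omega, by omega⟩
      · obtain ⟨p, hp1, hp2, _, hdn⟩ := hF2 o ho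
        exact ⟨o - p, hdn, by omega, by omega⟩
  have hcov : ∀ j : ℤ, ∃ o : ℤ, OccursAt x w o ∧ j ≤ o ∧
      o ≤ j + ((2 * L - 1 - m : ℕ) : ℤ) := by
    intro j
    rcases le_or_gt 0 j with hj | hj
    · obtain ⟨o, ho, h1, h2⟩ := hCup j.toNat
      have ht := Int.toNat_of_nonneg hj
      exact ⟨o, ho, by omega, by omega⟩
    · obtain ⟨o, ho, h1, h2⟩ := hCdn (-j).toNat
      have ht := Int.toNat_of_nonneg (by omega : (0 : ℤ) ≤ -j)
      exact ⟨o, ho, by omega, by omega⟩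
  have hall : Set.range (win x (2 * L - 1)) ⊆ goodWords x w (2 * L - 1) := by
    rintro u ⟨j, rfl⟩
    obtain ⟨o, ho, h1, h2⟩ := hcov j
    have hos : o - (((o - j).toNat : ℕ) : ℤ) = j := by omega
    have hmem := hwinD o (o - j).toNat (by omega) ho
    rwa [hos] at hmem
  have hle : (Set.range (win x (2 * L - 1))).ncard ≤ L - 1 := by
    have := Set.ncard_le_ncard hall hDfin
    omega
  obtain ⟨p, hp, hper⟩ := exists_period x (2 * L - 1) (L - 1) (by omega) hle
  exact hap p hp (funext fun i => hper i)

lemma window_in_language {X : Set (ℤ → A)} (hinv : shift '' X = X) {x : ℤ → A} (hx : x ∈ X)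
    (n : ℕ) (j : ℤ) : InLanguage X (win x n j) := by
  have h : ∃ y ∈ X, ∀ t : ℤ, y t = x (j + t) := by
    induction j using Int.induction_on with
    | zero => exact ⟨x, hx, fun t => by rw [zero_add]⟩
    | succ i ih =>
      obtain ⟨y, hy, hyt⟩ := ih
      refine ⟨shift y, ?_, fun t => ?_⟩
      · rw [← hinv]; exact ⟨y, hy, rfl⟩
      · show y (t + 1) = x ((i : ℤ) + 1 + t)
        rw [hyt]
        congr 1
        ring
    | pred i ih =>
      obtain ⟨y, hy, hyt⟩ := ih
      have hy' : y ∈ shift '' X := by rw [hinv]; exact hy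
      obtain ⟨z, hz, hzy⟩ := hy'
      refine ⟨z, hz, fun t => ?_⟩
      have h1 : z (t - 1 + 1) = y (t - 1) := by rw [← hzy]; rfl
      rw [hyt] at h1
      have h2 : z t = x (-(i : ℤ) + (t - 1)) := by
        rw [← h1]
        congr 1
        ring
      rw [h2]
      congr 1
      ring
  obtain ⟨y, hy, hyt⟩ := h
  refine ⟨y, hy, fun i => ?_⟩
  rw [hyt (0 + (i : ℤ))]
  show x (j + (0 + (i : ℤ))) = x (j + (i : ℤ))
  congr 1
  ring

def langGood (X : Set (ℤ → A)) {m : ℕ} (wd : Fin m → A) (n : ℕ) : Set (Fin n → A) :=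
  {u | InLanguage X u ∧ Contains u wd}

end ChainAux

/-- **Lemma 3.2.** Let `(X, σ)` be a subshift and `L ∈ ℕ`.  If
`X = X₀ ⊃ X₁ ⊃ ⋯ ⊃ X_k` is a descending chain of nonempty subshifts with
`X_{i+1} = X_i(w_i)` for some word `w_i ∈ L(X_i)` with `|w_i| ≤ L`, and each cylinder
`[w_i]₀⁺ ∩ X_i` contains an aperiodic point, then `k < P_X(2L−1)/L`. -/
theorem chain_length_lt {A : Type*} [Fintype A] [TopologicalSpace A] [DiscreteTopology A]
    (L : ℕ) (hL : 0 < L) (k : ℕ) (X : ℕ → Set (ℤ → A))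
    (hX_cl : ∀ i ≤ k, IsClosed (X i)) (hX_inv : ∀ i ≤ k, shift '' X i = X i)
    (hX_ne : ∀ i ≤ k, (X i).Nonempty)
    (m : ℕ → ℕ) (w : ∀ i, Fin (m i) → A)
    (hlen : ∀ i < k, m i ≤ L)
    (hlang : ∀ i < k, InLanguage (X i) (w i))
    (hstep : ∀ i < k, X (i + 1) = Forbid (X i) (w i))
    (hap : ∀ i < k, ∃ x ∈ X i, OccursAt x (w i) 0 ∧ IsAperiodic x) :
    (k : ℝ) < (complexity (X 0) (2 * L - 1) : ℝ) / (L : ℝ) := by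
  classical
  have hstep' : ∀ i < k, X (i + 1) ⊆ X i := by
    intro i hi y hy
    rw [hstep i hi] at hy
    exact hy.1
  have hsubd : ∀ (i d : ℕ), i + d ≤ k → X (i + d) ⊆ X i := by
    intro i d
    induction d with
    | zero => exact fun _ y hy => hy
    | succ d ih => exact fun hk y hy => ih (by omega) (hstep' (i + d) (by omega) hy)
  have hsub' : ∀ a b : ℕ, a ≤ b → b ≤ k → X b ⊆ X a := by
    intro a b hab hbk
    obtain ⟨d, rfl⟩ := Nat.exists_eq_add_of_le hab
    exact hsubd a d hbk
  have hDge : ∀ i < k, L ≤ (ChainAux.langGood (X i) (w i) (2 * L - 1)).ncard := by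
    intro i hi
    obtain ⟨x, hx, hocc, hapx⟩ := hap i hi
    refine le_trans (ChainAux.key hL (hlen i hi) x hapx (w i) hocc)
      (Set.ncard_le_ncard ?_ (Set.toFinite _))
    rintro u ⟨⟨j, rfl⟩, hconu⟩
    exact ⟨ChainAux.window_in_language (hX_inv i (le_of_lt hi)) hx (2 * L - 1) j, hconu⟩
  have hnotocc : ∀ i < k, ∀ y, y ∈ X (i + 1) → ∀ u : Fin (2 * L - 1) → A,
      OccursAt y u 0 → ChainAux.Contains u (w i) → False := by
    intro i hi y hy u hoccu hcont
    obtain ⟨r, hr, hcontains⟩ := hcont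
    rw [hstep i hi] at hy
    refine hy.2 (r : ℤ) (fun t => ?_)
    have h1 := hoccu ⟨r + (t : ℕ), by have := t.isLt; omega⟩
    have h3 := h1.trans (hcontains t)
    rw [show (r : ℤ) + ((t : ℕ) : ℤ) = 0 + (((r + (t : ℕ) : ℕ)) : ℤ) from by push_cast; ring]
    exact h3
  set T : ℕ → Finset (Fin (2 * L - 1) → A) :=
    fun i => (Set.toFinite (ChainAux.langGood (X i) (w i) (2 * L - 1))).toFinset with hT
  have hTmem : ∀ (i : ℕ) (u : Fin (2 * L - 1) → A),
      u ∈ T i ↔ u ∈ ChainAux.langGood (X i) (w i) (2 * L - 1) := by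
    intro i u
    rw [hT]
    exact Set.Finite.mem_toFinset _
  have hTcard : ∀ i < k, L ≤ (T i).card := by
    intro i hi
    have e : (T i).card = (ChainAux.langGood (X i) (w i) (2 * L - 1)).ncard := by
      rw [hT]
      exact (Set.ncard_eq_toFinset_card _ _).symm
    rw [e]
    exact hDge i hi
  have hdisjHelp : ∀ i j : ℕ, i < j → j < k → Disjoint (T i) (T j) := by
    intro i j hij hjk
    rw [Finset.disjoint_left]
    intro u hui huj
    rw [hTmem] at hui huj
    obtain ⟨⟨y, hy, hyo⟩, -⟩ := huj
    obtain ⟨-, hcont⟩ := hui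
    exact hnotocc i (by omega) y (hsub' (i + 1) j (by omega) (by omega) hy) u hyo hcont
  have hdisj' : ∀ i ∈ Finset.range k, ∀ j ∈ Finset.range k, i ≠ j → Disjoint (T i) (T j) := by
    intro i hi j hj hne
    simp only [Finset.mem_range] at hi hj
    rcases hne.lt_or_gt with h | h
    · exact hdisjHelp i j h hj
    · exact (hdisjHelp j i h hi).symm
  obtain ⟨xs, hxs⟩ := hX_ne k le_rfl
  have hustar_lang : InLanguage (X 0) (ChainAux.win xs (2 * L - 1) 0) :=
    ⟨xs, hsub' 0 k (Nat.zero_le k) le_rfl hxs, fun i => rfl⟩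
  have hustar_not : ∀ i < k, ChainAux.win xs (2 * L - 1) 0 ∉ T i := by
    intro i hi hmem
    rw [hTmem] at hmem
    exact hnotocc i hi xs (hsub' (i + 1) k (by omega) le_rfl hxs) _ (fun t => rfl) hmem.2
  have hBcard : k * L ≤ ((Finset.range k).biUnion T).card := by
    rw [Finset.card_biUnion hdisj']
    calc k * L = ∑ _i ∈ Finset.range k, L := by
          rw [Finset.sum_const, Finset.card_range, smul_eq_mul]
    _ ≤ ∑ i ∈ Finset.range k, (T i).card :=
          Finset.sum_le_sum fun i hi => hTcard i (Finset.mem_range.mp hi)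
  have hnotB : ChainAux.win xs (2 * L - 1) 0 ∉ (Finset.range k).biUnion T := by
    intro hmem
    obtain ⟨i, hi, hti⟩ := Finset.mem_biUnion.mp hmem
    exact hustar_not i (Finset.mem_range.mp hi) hti
  have hfinFull : ({u : Fin (2 * L - 1) → A | InLanguage (X 0) u}).Finite := Set.toFinite _
  have hsubFull : insert (ChainAux.win xs (2 * L - 1) 0) ((Finset.range k).biUnion T)
      ⊆ hfinFull.toFinset := by
    intro u hu
    rw [Set.Finite.mem_toFinset]
    rcases Finset.mem_insert.mp hu with rfl | hu'
    · exact hustar_lang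
    · obtain ⟨i, hi, hti⟩ := Finset.mem_biUnion.mp hu'
      rw [hTmem] at hti
      obtain ⟨⟨y, hy, hyo⟩, -⟩ := hti
      exact ⟨y, hsub' 0 i (Nat.zero_le i) (le_of_lt (Finset.mem_range.mp hi)) hy, hyo⟩
  have hfinal : k * L + 1 ≤ complexity (X 0) (2 * L - 1) := by
    have h1 := Finset.card_insert_of_notMem hnotB
    have h2 := Finset.card_le_card hsubFull
    have h3 : hfinFull.toFinset.card = complexity (X 0) (2 * L - 1) :=
      (Set.ncard_eq_toFinset_card _ hfinFull).symm
    omega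
  rw [lt_div_iff₀ (by exact_mod_cast hL : (0 : ℝ) < (L : ℝ))]
  have hcast : ((k * L : ℕ) : ℝ) < ((complexity (X 0) (2 * L - 1) : ℕ) : ℝ) := by
    exact_mod_cast (by omega : k * L < complexity (X 0) (2 * L - 1))
  push_cast at hcast
  linarith
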